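/- Let Γ be a perfect group generated by a finite set S = S⁻¹. Then there exists a constant ν > 0 such that cl(g) ≤ ν·|g|_{S̄} for every g ∈ Γ, where cl denotes the commutator length. -/

import Mathlib

/-- The set of all conjugates of elements of `S`. -/
def conjSet {G : Type*} [Group G] (S : Set G) : Set G :=
  {x | ∃ g : G, ∃ s ∈ S, x = g * s * g⁻¹}

/-- The word norm of `g` with respect to a generating set `T`:
the least length of a word in elements of `T` expressing `g`. -/
noncomputable def wordNorm {G : Type*} [Group G] (T : Set G) (g : G) : ℕ :=
  sInf {k | ∃ l : List G, (∀ x ∈ l, x ∈ T) ∧ l.prod = g ∧ l.length = k}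

lemma wordNorm_le_length {G : Type*} [Group G] (T : Set G) (l : List G)
    (hl : ∀ x ∈ l, x ∈ T) : wordNorm T l.prod ≤ l.length :=
  Nat.sInf_le ⟨l, hl, rfl, rfl⟩

lemma mem_commutatorSet_of_inv {G : Type*} [Group G] {y : G}
    (h : y⁻¹ ∈ commutatorSet G) : y ∈ commutatorSet G := by
  obtain ⟨a, b, hab⟩ := h
  exact ⟨b, a, by rw [← commutatorElement_inv, hab, inv_inv]⟩

lemma conj_mem_commutatorSet {G : Type*} [Group G] {x : G}
    (h : x ∈ commutatorSet G) (g : G) : g * x * g⁻¹ ∈ commutatorSet G := by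
  obtain ⟨a, b, rfl⟩ := h
  refine ⟨g * a * g⁻¹, g * b * g⁻¹, ?_⟩
  simp only [commutatorElement_def]
  group

lemma conj_list_prod {G : Type*} [Group G] (h : G) (l : List G) :
    (l.map (fun x => h * x * h⁻¹)).prod = h * l.prod * h⁻¹ := by
  induction l with
  | nil => simp
  | cons a t ih => simp only [List.map_cons, List.prod_cons, ih]; group

lemma exists_commutator_list {G : Type*} [Group G] (hperf : commutator G = ⊤) (g : G) :
    ∃ l : List G, (∀ x ∈ l, x ∈ commutatorSet G) ∧ l.prod = g ∧
      l.length = wordNorm (commutatorSet G) g := by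
  have hg : g ∈ Subgroup.closure (commutatorSet G) := by
    rw [← commutator_eq_closure, hperf]; trivial
  have hg' : g ∈ Submonoid.closure (commutatorSet G ∪ (commutatorSet G)⁻¹) := by
    rw [← Subgroup.closure_toSubmonoid]; exact hg
  obtain ⟨l, hl, hprod⟩ := Submonoid.exists_list_of_mem_closure hg'
  have hl' : ∀ x ∈ l, x ∈ commutatorSet G := fun x hx => by
    rcases hl x hx with h | h
    · exact h
    · exact mem_commutatorSet_of_inv h
  have hne : {k | ∃ l : List G, (∀ x ∈ l, x ∈ commutatorSet G) ∧ l.prod = g ∧ l.length = k}.Nonempty :=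
    ⟨l.length, l, hl', hprod, rfl⟩
  exact Nat.sInf_mem hne

/-- On a perfect group generated by a finite symmetric set S, the commutator
length is Lipschitz with respect to the bi-invariant word norm. -/
theorem commutator_length_lipschitz {Γ : Type*} [Group Γ]
    (S : Set Γ) (hfin : S.Finite) (hinv : S⁻¹ = S)
    (hgen : Subgroup.closure S = ⊤)
    (hperf : commutator Γ = ⊤) :
    ∃ ν : ℝ, 0 < ν ∧ ∀ g : Γ,
      (wordNorm (commutatorSet Γ) g : ℝ) ≤ ν * (wordNorm (conjSet S) g : ℝ) := by
  classical
  set C : ℕ := hfin.toFinset.sup (fun s => wordNorm (commutatorSet Γ) s) with hC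
  refine ⟨(C : ℝ) + 1, by positivity, fun g => ?_⟩
  -- key: any product of conjugates of elements of S has commutator length ≤ C * length
  have key : ∀ l : List Γ, (∀ x ∈ l, x ∈ conjSet S) →
      ∃ L : List Γ, (∀ x ∈ L, x ∈ commutatorSet Γ) ∧ L.prod = l.prod ∧
        L.length ≤ C * l.length := by
    intro l
    induction l with
    | nil => intro _; exact ⟨[], by simp, by simp, by simp⟩
    | cons y t ih =>
      intro hall
      obtain ⟨L, hLmem, hLprod, hLlen⟩ := ih (fun x hx => hall x (List.mem_cons_of_mem _ hx))
      obtain ⟨h, s, hs, rfl⟩ := hall y List.mem_cons_self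
      obtain ⟨ls, hlsmem, hlsprod, hlslen⟩ := exists_commutator_list hperf s
      refine ⟨ls.map (fun x => h * x * h⁻¹) ++ L, ?_, ?_, ?_⟩
      · intro x hx
        rcases List.mem_append.mp hx with hx | hx
        · obtain ⟨z, hz, rfl⟩ := List.mem_map.mp hx
          exact conj_mem_commutatorSet (hlsmem z hz) h
        · exact hLmem x hx
      · rw [List.prod_append, conj_list_prod, hlsprod, hLprod, List.prod_cons]
      · rw [List.length_append, List.length_map, hlslen, List.length_cons]
        have hsC : wordNorm (commutatorSet Γ) s ≤ C :=
          Finset.le_sup (f := fun s => wordNorm (commutatorSet Γ) s)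
            (hfin.mem_toFinset.mpr hs)
        calc wordNorm (commutatorSet Γ) s + L.length ≤ C + C * t.length := by
              exact Nat.add_le_add hsC hLlen
          _ = C * (t.length + 1) := by ring
  -- g is a product of elements of conjSet S
  have hg : g ∈ Subgroup.closure S := by rw [hgen]; trivial
  have hg' : g ∈ Submonoid.closure (S ∪ S⁻¹) := by
    rw [← Subgroup.closure_toSubmonoid]; exact hg
  obtain ⟨l₀, hl₀, hl₀prod⟩ := Submonoid.exists_list_of_mem_closure hg'
  have hl₀' : ∀ x ∈ l₀, x ∈ conjSet S := by
    intro x hx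
    have hxS : x ∈ S := by
      rcases hl₀ x hx with h | h
      · exact h
      · rw [← hinv]; exact h
    exact ⟨1, x, hxS, by group⟩
  have hne : {k | ∃ l : List Γ, (∀ x ∈ l, x ∈ conjSet S) ∧ l.prod = g ∧ l.length = k}.Nonempty :=
    ⟨l₀.length, l₀, hl₀', hl₀prod, rfl⟩
  obtain ⟨l, hlmem, hlprod, hllen⟩ := Nat.sInf_mem hne
  obtain ⟨L, hLmem, hLprod, hLlen⟩ := key l hlmem
  have h1 : wordNorm (commutatorSet Γ) g ≤ C * wordNorm (conjSet S) g := by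
    calc wordNorm (commutatorSet Γ) g = wordNorm (commutatorSet Γ) L.prod := by
          rw [hLprod, hlprod]
      _ ≤ L.length := wordNorm_le_length _ _ hLmem
      _ ≤ C * l.length := hLlen
      _ = C * wordNorm (conjSet S) g := by rw [hllen]; rfl
  calc (wordNorm (commutatorSet Γ) g : ℝ) ≤ (C : ℝ) * (wordNorm (conjSet S) g : ℝ) := by
        exact_mod_cast h1
    _ ≤ ((C : ℝ) + 1) * (wordNorm (conjSet S) g : ℝ) := by
        have : (0:ℝ) ≤ (wordNorm (conjSet S) g : ℝ) := Nat.cast_nonneg _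
        nlinarith
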